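/- If a Boolean function F over variables V admits a fooling set of size 2^k with respect to a partition of its variables into a first half A and second half B under a given variable ordering, then any OBDD for F under that ordering has at least 2^k nodes. Applying this with the (n-3)/4 edge-independent split faces construction shows that any OBDD representation of the transitivity-constraint function F_trans(E_{n×n}) of the n×n mesh requires Ω(2^{n/4}) nodes under every variable ordering. -/

import Mathlib

/-- An Ordered Binary Decision Diagram over the Boolean variables `x_0 < x_1 < ⋯ <
x_{m-1}` (the variable ordering is the order of the indices).  It has `size` internal
(branching) nodes plus the two terminal nodes `0` and `1` (represented by `Sum.inr`);
along every edge the tested variable index strictly increases. -/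
structure OBDD (m : ℕ) where
  size : ℕ
  root : Fin size ⊕ Bool
  var : Fin size → Fin m
  lo : Fin size → Fin size ⊕ Bool
  hi : Fin size → Fin size ⊕ Bool
  ordered : ∀ u v : Fin size,
    (lo u = Sum.inl v ∨ hi u = Sum.inl v) → var u < var v

/-- Fuelled evaluation of an OBDD from a given node under assignment `χ`. -/
def OBDD.evalAux {m : ℕ} (D : OBDD m) (χ : Fin m → Bool) :
    ℕ → (Fin D.size ⊕ Bool) → Bool
  | 0, _ => false
  | _ + 1, Sum.inr b => b
  | fuel + 1, Sum.inl u =>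
      D.evalAux χ fuel (if χ (D.var u) then D.hi u else D.lo u)

/-- The Boolean function computed by an OBDD (fuel `m + 1` always suffices since the
variable index strictly increases along every path). -/
def OBDD.eval {m : ℕ} (D : OBDD m) (χ : Fin m → Bool) : Bool :=
  D.evalAux χ (m + 1) D.root

/-- The number of nodes of an OBDD, including the two terminal nodes. -/
def OBDD.numNodes {m : ℕ} (D : OBDD m) : ℕ := D.size + 2

/-- The `n × n` planar mesh graph `M_n`. -/
def mesh (n : ℕ) : SimpleGraph (Fin n × Fin n) where
  Adj a b := ((a.1 : ℤ) - (b.1 : ℤ)).natAbs + ((a.2 : ℤ) - (b.2 : ℤ)).natAbs = 1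
  symm := ⟨by intro a b h; omega⟩
  loopless := ⟨by intro a h; omega⟩

/-- Given an ordering `σ` identifying the Boolean variables `Fin m` with the edges of
the mesh `M_n`, the label that the assignment `χ` gives to the unordered pair `e`
(edges not in the mesh get an irrelevant default label). -/
noncomputable def edgeLabel {n m : ℕ} (σ : Fin m ≃ (mesh n).edgeSet)
    (χ : Fin m → Bool) (e : Sym2 (Fin n × Fin n)) : Bool :=
  open scoped Classical in
  if h : e ∈ (mesh n).edgeSet then χ (σ.symm ⟨e, h⟩) else false

/-- `l` is the vertex list of a cycle of the mesh `M_n` (successive vertices, and the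
last and first vertex, are adjacent). -/
def IsMeshCycle (n : ℕ) (l : List (Fin n × Fin n)) : Prop :=
  3 ≤ l.length ∧ ∀ p ∈ l.zip (l.rotate 1), (mesh n).Adj p.1 p.2

/-- The transitivity-constraint function `F_trans(E_{n×n})` of the mesh, as a function
of an assignment `χ` to the edge variables `Fin m` (via the ordering `σ`): it holds
iff no cycle of the mesh has exactly one 0-edge. -/
def MeshTransHolds (n m : ℕ) (σ : Fin m ≃ (mesh n).edgeSet)
    (χ : Fin m → Bool) : Prop :=
  ¬ ∃ l : List (Fin n × Fin n), IsMeshCycle n l ∧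
      ((l.zip (l.rotate 1)).filter
        (fun p => !edgeLabel σ χ (s(p.1, p.2)))).length = 1


namespace OBDDFool

variable {m : ℕ} (D : OBDD m)

/-- depth bound of a node -/
def depth (s : Fin D.size ⊕ Bool) : ℕ :=
  match s with
  | Sum.inr _ => 0
  | Sum.inl u => m - (D.var u)

lemma depth_pos (u : Fin D.size) : 1 ≤ depth D (Sum.inl u) := by
  have := (D.var u).isLt
  simp [depth]; omega

lemma depth_next (u : Fin D.size) (v : Fin D.size)
    (h : D.lo u = Sum.inl v ∨ D.hi u = Sum.inl v) :
    depth D (Sum.inl v) < depth D (Sum.inl u) := by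
  have h1 := D.ordered u v h
  have h2 := (D.var v).isLt
  simp [depth]; omega

lemma depth_step (χ : Fin m → Bool) (u : Fin D.size) :
    depth D (if χ (D.var u) then D.hi u else D.lo u) < depth D (Sum.inl u) := by
  rcases hs : (if χ (D.var u) then D.hi u else D.lo u) with v | b
  · apply depth_next
    split at hs
    · right; exact hs
    · left; exact hs
  · exact depth_pos D u

lemma evalAux_fuel (χ : Fin m → Bool) :
    ∀ (f f' : ℕ) (s : Fin D.size ⊕ Bool), depth D s < f → depth D s < f' →
      D.evalAux χ f s = D.evalAux χ f' s := by
  intro f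
  induction f with
  | zero => intro f' s h; omega
  | succ f ih =>
    intro f' s h h'
    rcases f' with _ | f'
    · omega
    rcases s with u | b
    · have hd := depth_step D χ u
      simp only [OBDD.evalAux]
      exact ih f' _ (by omega) (by omega)
    · simp [OBDD.evalAux]

/-- partial evaluation: follow the path while the tested variable is `< h`. -/
def reachAux (h : ℕ) (χ : Fin m → Bool) : ℕ → (Fin D.size ⊕ Bool) → (Fin D.size ⊕ Bool)
  | 0, s => s
  | _ + 1, Sum.inr b => Sum.inr b
  | fuel + 1, Sum.inl u =>
      if (D.var u : ℕ) < h then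
        reachAux h χ fuel (if χ (D.var u) then D.hi u else D.lo u)
      else Sum.inl u

lemma depth_reachAux (h : ℕ) (χ : Fin m → Bool) :
    ∀ (f : ℕ) (s : Fin D.size ⊕ Bool), depth D (reachAux D h χ f s) ≤ depth D s := by
  intro f
  induction f with
  | zero => intro s; simp [reachAux]
  | succ f ih =>
    intro s
    rcases s with u | b
    · simp only [reachAux]
      split
      · exact le_trans (ih _) (le_of_lt (depth_step D χ u))
      · exact le_refl _
    · simp [reachAux]

/-- reachAux only depends on the variables `< h`. -/
lemma reachAux_congr (h : ℕ) (χ χ' : Fin m → Bool)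
    (hagree : ∀ i : Fin m, (i : ℕ) < h → χ i = χ' i) :
    ∀ (f : ℕ) (s : Fin D.size ⊕ Bool), reachAux D h χ f s = reachAux D h χ' f s := by
  intro f
  induction f with
  | zero => intro s; simp [reachAux]
  | succ f ih =>
    intro s
    rcases s with u | b
    · simp only [reachAux]
      split
      · rename_i hlt
        rw [hagree (D.var u) hlt, ih]
      · rfl
    · simp [reachAux]

/-- reached node is terminal or has variable `≥ h`. -/
lemma reachAux_ge (h : ℕ) (χ : Fin m → Bool) :
    ∀ (f : ℕ) (s : Fin D.size ⊕ Bool), depth D s < f →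
      ∀ u : Fin D.size, reachAux D h χ f s = Sum.inl u → h ≤ (D.var u : ℕ) := by
  intro f
  induction f with
  | zero => intro s h; omega
  | succ f ih =>
    intro s hd u hr
    rcases s with v | b
    · simp only [reachAux] at hr
      split at hr
      · exact ih _ (by have := depth_step D χ v; omega) u hr
      · rename_i hge
        cases hr; omega
    · simp [reachAux] at hr

/-- evaluation factors through reach. -/
lemma evalAux_reach (h : ℕ) (χ : Fin m → Bool) :
    ∀ (f : ℕ) (s : Fin D.size ⊕ Bool), depth D s < f →
      D.evalAux χ f s = D.evalAux χ f (reachAux D h χ f s) := by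
  intro f
  induction f with
  | zero => intro s hd; omega
  | succ f ih =>
    intro s hd
    rcases s with u | b
    · simp only [reachAux]
      split
      · have hd2 : depth D (if χ (D.var u) then D.hi u else D.lo u) < f := by
          have := depth_step D χ u; omega
        simp only [OBDD.evalAux]
        rw [ih _ hd2]
        apply evalAux_fuel
        · exact lt_of_le_of_lt (depth_reachAux D h χ f _) hd2
        · have := depth_reachAux D h χ f (if χ (D.var u) then D.hi u else D.lo u)
          omega
      · rfl
    · simp [reachAux]

/-- evaluation from a node of variable `≥ h` only depends on variables `≥ h`. -/
lemma evalAux_congr_ge (h : ℕ) (χ χ' : Fin m → Bool)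
    (hagree : ∀ i : Fin m, h ≤ (i : ℕ) → χ i = χ' i) :
    ∀ (f : ℕ) (s : Fin D.size ⊕ Bool),
      (∀ u, s = Sum.inl u → h ≤ (D.var u : ℕ)) →
      D.evalAux χ f s = D.evalAux χ' f s := by
  intro f
  induction f with
  | zero => intro s _; simp [OBDD.evalAux]
  | succ f ih =>
    intro s hs
    rcases s with u | b
    · have hu : h ≤ (D.var u : ℕ) := hs u rfl
      simp only [OBDD.evalAux]
      rw [hagree (D.var u) hu]
      apply ih
      intro v hv
      have : D.lo u = Sum.inl v ∨ D.hi u = Sum.inl v := by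
        split at hv
        · right; exact hv
        · left; exact hv
      have := D.ordered u v this
      omega
    · simp [OBDD.evalAux]

theorem fooling (h k : ℕ) (F : (Fin m → Bool) → Bool)
    (a b : Fin (2 ^ k) → (Fin m → Bool))
    (h1 : ∀ y, F (fun i => if (i : ℕ) < h then a y i else b y i) = true)
    (h2 : ∀ y z, y ≠ z →
      F (fun i => if (i : ℕ) < h then a y i else b z i) = false)
    (D : OBDD m) (hD : ∀ χ, D.eval χ = F χ) : 2 ^ k ≤ D.numNodes := by
  classical
  set cmb : Fin (2 ^ k) → Fin (2 ^ k) → (Fin m → Bool) :=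
    fun y z => fun i => if (i : ℕ) < h then a y i else b z i with hcmb
  have hroot : depth D D.root < m + 1 := by
    rcases D.root with u | b
    · have := (D.var u).isLt; simp only [depth]; omega
    · simp only [depth]; omega
  set r : Fin (2 ^ k) → (Fin D.size ⊕ Bool) :=
    fun y => reachAux D h (cmb y y) (m + 1) D.root with hr
  have hreq : ∀ y z, reachAux D h (cmb y z) (m + 1) D.root = r y := by
    intro y z
    apply reachAux_congr
    intro i hi
    simp only [hcmb]
    rw [if_pos hi, if_pos hi]
  have hinj : Function.Injective r := by
    intro y z hyz
    by_contra hne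
    have hfalse := h2 y z hne
    have heval : D.eval (cmb y z) = D.eval (cmb z z) := by
      unfold OBDD.eval
      rw [evalAux_reach D h (cmb y z) (m+1) D.root hroot,
          evalAux_reach D h (cmb z z) (m+1) D.root hroot]
      rw [hreq y z, hreq z z, hyz]
      apply evalAux_congr_ge D h
      · intro i hi
        simp only [hcmb]
        rw [if_neg (by omega), if_neg (by omega)]
      · intro u hu
        refine reachAux_ge D h (cmb z z) (m+1) D.root hroot u ?_
        rw [hreq z z] ; exact hu
    rw [hD, hD, h1 z, hfalse] at heval
    exact Bool.false_ne_true heval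
  have := Fintype.card_le_of_injective r hinj
  simpa [OBDD.numNodes, Fintype.card_sum] using this

end OBDDFool


abbrev A2 := Bool × Bool

def E4a : Fin 4 → Sym2 A2 :=
  ![s((false,false),(false,true)), s((true,false),(true,true)),
    s((false,false),(true,false)), s((false,true),(true,true))]

/-- abstract adjacency on the square -/
def adjA (p q : A2) : Prop := (p.1 = q.1 ∧ p.2 ≠ q.2) ∨ (p.1 ≠ q.1 ∧ p.2 = q.2)

instance (p q : A2) : Decidable (adjA p q) := by unfold adjA; infer_instance

lemma E4a_repr : ∀ j : Fin 4, ∃ p q : A2, E4a j = s(p, q) ∧ adjA p q := by decide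

lemma adjA_E4a : ∀ p q : A2, adjA p q → ∃ j : Fin 4, E4a j = s(p, q) := by decide

namespace MeshFool

variable {n : ℕ}

lemma mesh_adj (x y : Fin n × Fin n) :
    (mesh n).Adj x y ↔
      (((x.1:ℕ) = y.1 + 1 ∨ (y.1:ℕ) = x.1 + 1) ∧ (x.2:ℕ) = y.2) ∨
      ((x.1:ℕ) = y.1 ∧ ((x.2:ℕ) = y.2 + 1 ∨ (y.2:ℕ) = x.2 + 1)) := by
  show (((x.1 : ℤ) - (y.1 : ℤ)).natAbs + ((x.2 : ℤ) - (y.2 : ℤ)).natAbs = 1) ↔ _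
  omega

def fvtx (n r c : ℕ) (hr : r + 1 < n) (hc : c + 1 < n) (p : A2) : Fin n × Fin n :=
  (⟨r + cond p.1 1 0, by cases p.1 <;> simp <;> omega⟩,
   ⟨c + cond p.2 1 0, by cases p.2 <;> simp <;> omega⟩)

def fEdge (n r c : ℕ) (hr : r + 1 < n) (hc : c + 1 < n) (j : Fin 4) :
    Sym2 (Fin n × Fin n) :=
  Sym2.map (fvtx n r c hr hc) (E4a j)

lemma fvtx_injective (r c : ℕ) (hr : r + 1 < n) (hc : c + 1 < n) :
    Function.Injective (fvtx n r c hr hc) := by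
  intro p q h
  obtain ⟨a, b⟩ := p
  obtain ⟨a', b'⟩ := q
  simp only [fvtx, Prod.mk.injEq, Fin.mk.injEq] at h
  cases a <;> cases a' <;> cases b <;> cases b' <;> simp_all

lemma fvtx_row (r c : ℕ) (hr : r + 1 < n) (hc : c + 1 < n) (p : A2) :
    ((fvtx n r c hr hc p).1 : ℕ) = r + cond p.1 1 0 := rfl

lemma fvtx_col (r c : ℕ) (hr : r + 1 < n) (hc : c + 1 < n) (p : A2) :
    ((fvtx n r c hr hc p).2 : ℕ) = c + cond p.2 1 0 := rfl

lemma adjA_iff_fvtx (r c : ℕ) (hr : r + 1 < n) (hc : c + 1 < n) (p q : A2) :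
    (mesh n).Adj (fvtx n r c hr hc p) (fvtx n r c hr hc q) ↔ adjA p q := by
  rw [mesh_adj]
  simp only [fvtx_row, fvtx_col]
  obtain ⟨a, b⟩ := p
  obtain ⟨a', b'⟩ := q
  unfold adjA
  cases a <;> cases a' <;> cases b <;> cases b' <;> simp <;> omega

/-- each face edge is a mesh edge -/
lemma fEdge_mem_edgeSet (r c : ℕ) (hr : r + 1 < n) (hc : c + 1 < n) (j : Fin 4) :
    fEdge n r c hr hc j ∈ (mesh n).edgeSet := by
  obtain ⟨p, q, hpq, hadj⟩ := E4a_repr j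
  rw [fEdge, hpq, Sym2.map_pair_eq, SimpleGraph.mem_edgeSet]
  exact (adjA_iff_fvtx r c hr hc p q).2 hadj

/-- endpoints of face edges are face corners -/
lemma fEdge_endpoints (r c : ℕ) (hr : r + 1 < n) (hc : c + 1 < n) (j : Fin 4)
    (x : Fin n × Fin n) (hx : x ∈ fEdge n r c hr hc j) :
    ∃ p : A2, x = fvtx n r c hr hc p := by
  obtain ⟨p, q, hpq, -⟩ := E4a_repr j
  rw [fEdge, hpq, Sym2.map_pair_eq, Sym2.mem_iff] at hx
  rcases hx with h | h <;> exact ⟨_, h⟩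

lemma E4a_distinct : ∀ (i j : Fin 4), i ≠ j → E4a i ≠ E4a j := by decide

lemma fEdge_inj (r c : ℕ) (hr : r + 1 < n) (hc : c + 1 < n) (j j' : Fin 4)
    (h : fEdge n r c hr hc j = fEdge n r c hr hc j') : j = j' := by
  by_contra hne
  exact E4a_distinct j j' hne (Sym2.map.injective (fvtx_injective r c hr hc) h)

/-- two adjacent corners of a face are joined by a face edge -/
lemma adj_corners (r c : ℕ) (hr : r + 1 < n) (hc : c + 1 < n) (p q : A2)
    (h : (mesh n).Adj (fvtx n r c hr hc p) (fvtx n r c hr hc q)) :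
    ∃ j : Fin 4, s(fvtx n r c hr hc p, fvtx n r c hr hc q) = fEdge n r c hr hc j := by
  obtain ⟨j, hj⟩ := adjA_E4a p q ((adjA_iff_fvtx r c hr hc p q).1 h)
  exact ⟨j, by rw [fEdge, hj, Sym2.map_pair_eq]⟩

end MeshFool

def Stp (c1 c2 : Fin 4) (x y : A2) : Prop :=
  ∃ j : Fin 4, j ≠ c1 ∧ j ≠ c2 ∧ s(x,y) = E4a j

def Rb (c1 c2 : Fin 4) (x y : A2) : Prop :=
  ∃ z w : A2, (x = z ∨ Stp c1 c2 x z) ∧ (z = w ∨ Stp c1 c2 z w) ∧ (w = y ∨ Stp c1 c2 w y)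

instance (c1 c2 : Fin 4) (x y : A2) : Decidable (Stp c1 c2 x y) := by
  unfold Stp; infer_instance

instance (c1 c2 : Fin 4) (x y : A2) : Decidable (Rb c1 c2 x y) := by
  unfold Rb; infer_instance

lemma D0 : ∀ (c1 c2 : Fin 4) (x : A2), Rb c1 c2 x x := by decide

lemma D1 : ∀ (c1 c2 : Fin 4) (v x x' : A2),
    Rb c1 c2 v x → Stp c1 c2 x x' → Rb c1 c2 v x' := by decide

lemma D2 : ∀ (c1 c2 : Fin 4), c1 ≠ c2 → ∀ (u v : A2),
    (s(u,v) = E4a c1 ∨ s(u,v) = E4a c2) → ¬ Rb c1 c2 v u := by decide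

lemma abstract_no_walk (c1 c2 : Fin 4) (hne : c1 ≠ c2) (T : ℕ) (w : ℕ → A2)
    (hstep : ∀ t, t < T → Stp c1 c2 (w t) (w (t+1)))
    (hbad : s(w T, w 0) = E4a c1 ∨ s(w T, w 0) = E4a c2) : False := by
  have hr : ∀ t, t ≤ T → Rb c1 c2 (w 0) (w t) := by
    intro t
    induction t with
    | zero => intro _; exact D0 c1 c2 (w 0)
    | succ t ih =>
      intro h
      exact D1 c1 c2 (w 0) (w t) (w (t+1)) (ih (by omega)) (hstep t (by omega))
  exact D2 c1 c2 hne (w T) (w 0) hbad (hr T le_rfl)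


lemma exists_unique_bad {α : Type*} (P : List α) (q : α → Bool)
    (h : (P.filter q).length = 1) :
    ∃ (t0 : ℕ) (h0 : t0 < P.length), q (P[t0]'h0) = true ∧
      ∀ t (ht : t < P.length), t ≠ t0 → q (P[t]'ht) = false := by
  induction P with
  | nil => simp at h
  | cons x xs ih =>
    by_cases hq : q x = true
    · rw [List.filter_cons_of_pos hq] at h
      simp only [List.length_cons] at h
      have hnil : xs.filter q = [] := List.length_eq_zero_iff.1 (by omega)
      refine ⟨0, by simp, hq, ?_⟩
      intro t ht hne
      rcases t with _ | s
      · omega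
      · simp only [List.getElem_cons_succ]
        have := List.filter_eq_nil_iff.1 hnil
        simp only [List.length_cons] at ht
        have hmem := List.getElem_mem (l := xs) (n := s) (h := by omega)
        simpa using this _ hmem
    · rw [List.filter_cons_of_neg (by simpa using hq)] at h
      obtain ⟨t0, h0, hb, hg⟩ := ih h
      refine ⟨t0 + 1, by simp; omega, by simpa using hb, ?_⟩
      intro t ht hne
      rcases t with _ | s
      · simpa using hq
      · simp only [List.getElem_cons_succ]
        exact hg s (by simp at ht; omega) (by omega)

lemma add_mod_ne (L t0 j : ℕ) (h1 : t0 < L) (h2 : 1 ≤ j) (h3 : j < L) :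
    (t0 + j) % L ≠ t0 := by
  rcases Nat.lt_or_ge (t0 + j) L with h | h
  · rw [Nat.mod_eq_of_lt h]; omega
  · have : (t0 + j) % L = t0 + j - L := by
      rw [Nat.mod_eq_sub_mod h, Nat.mod_eq_of_lt (by omega)]
    omega

namespace MeshFool

structure Sel (n m hcut k : ℕ) (σ : Fin m ≃ (mesh n).edgeSet) : Type where
  row : Fin k → ℕ
  col : Fin k → ℕ
  hrow : ∀ i, row i + 1 < n
  hcol : ∀ i, col i + 1 < n
  far : ∀ i j, i ≠ j →
    row i + 2 ≤ row j ∨ row j + 2 ≤ row i ∨ col i + 2 ≤ col j ∨ col j + 2 ≤ col i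
  aE : Fin k → Fin m
  bE : Fin k → Fin m
  ja : Fin k → Fin 4
  jb : Fin k → Fin 4
  haE : ∀ i, (σ (aE i) : Sym2 (Fin n × Fin n)) = fEdge n (row i) (col i) (hrow i) (hcol i) (ja i)
  hbE : ∀ i, (σ (bE i) : Sym2 (Fin n × Fin n)) = fEdge n (row i) (col i) (hrow i) (hcol i) (jb i)
  hjne : ∀ i, ja i ≠ jb i
  hah : ∀ i, (aE i : ℕ) < hcut
  hbh : ∀ i, hcut ≤ (bE i : ℕ)

namespace Sel

variable {n m hcut k : ℕ} {σ : Fin m ≃ (mesh n).edgeSet} (S : Sel n m hcut k σ)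

lemma cond_le_one (b : Bool) : cond b 1 0 ≤ 1 := by cases b <;> simp

lemma corner_face_eq {i i' : Fin k} {p q : A2}
    (h : fvtx n (S.row i) (S.col i) (S.hrow i) (S.hcol i) p
       = fvtx n (S.row i') (S.col i') (S.hrow i') (S.hcol i') q) : i = i' := by
  by_contra hne
  have h1 : ((fvtx n (S.row i) (S.col i) (S.hrow i) (S.hcol i) p).1 : ℕ)
      = ((fvtx n (S.row i') (S.col i') (S.hrow i') (S.hcol i') q).1 : ℕ) := by rw [h]
  have h2 : ((fvtx n (S.row i) (S.col i) (S.hrow i) (S.hcol i) p).2 : ℕ)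
      = ((fvtx n (S.row i') (S.col i') (S.hrow i') (S.hcol i') q).2 : ℕ) := by rw [h]
  rw [fvtx_row, fvtx_row] at h1
  rw [fvtx_col, fvtx_col] at h2
  have c1 := cond_le_one p.1
  have c2 := cond_le_one p.2
  have c3 := cond_le_one q.1
  have c4 := cond_le_one q.2
  rcases S.far i i' hne with h | h | h | h <;> omega

lemma face_edge_eq {i i' : Fin k} {j j' : Fin 4}
    (h : fEdge n (S.row i) (S.col i) (S.hrow i) (S.hcol i) j
       = fEdge n (S.row i') (S.col i') (S.hrow i') (S.hcol i') j') : i = i' := by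
  obtain ⟨p, q, hpq, -⟩ := E4a_repr j
  have hx : fvtx n (S.row i) (S.col i) (S.hrow i) (S.hcol i) p
      ∈ fEdge n (S.row i) (S.col i) (S.hrow i) (S.hcol i) j := by
    rw [fEdge, hpq, Sym2.map_pair_eq, Sym2.mem_iff]; left; rfl
  rw [h] at hx
  obtain ⟨p', hp'⟩ := fEdge_endpoints _ _ _ _ _ _ hx
  exact S.corner_face_eq hp'

lemma face_edge_eq' {i i' : Fin k} {j j' : Fin 4}
    (h : fEdge n (S.row i) (S.col i) (S.hrow i) (S.hcol i) j
       = fEdge n (S.row i') (S.col i') (S.hrow i') (S.hcol i') j') : i = i' ∧ j = j' := by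
  have hi := S.face_edge_eq h
  subst hi
  exact ⟨rfl, fEdge_inj _ _ _ _ _ _ h⟩

lemma aE_inj {i i' : Fin k} (h : S.aE i' = S.aE i) : i' = i := by
  have : (σ (S.aE i') : Sym2 (Fin n × Fin n)) = (σ (S.aE i) : Sym2 (Fin n × Fin n)) := by rw [h]
  rw [S.haE, S.haE] at this
  exact S.face_edge_eq this

lemma bE_inj {i i' : Fin k} (h : S.bE i' = S.bE i) : i' = i := by
  have : (σ (S.bE i') : Sym2 (Fin n × Fin n)) = (σ (S.bE i) : Sym2 (Fin n × Fin n)) := by rw [h]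
  rw [S.hbE, S.hbE] at this
  exact S.face_edge_eq this

lemma aE_ne_bE (i i' : Fin k) : S.aE i ≠ S.bE i' := by
  intro h
  have : (σ (S.aE i) : Sym2 (Fin n × Fin n)) = (σ (S.bE i') : Sym2 (Fin n × Fin n)) := by rw [h]
  rw [S.haE, S.hbE] at this
  obtain ⟨hi, hj⟩ := S.face_edge_eq' this
  subst hi
  exact S.hjne i hj

noncomputable def asg (y : Fin k → Bool) : Fin m → Bool := fun idx =>
  open scoped Classical in
  if h1 : ∃ i, S.aE i = idx then y h1.choose
  else if h2 : ∃ i, S.bE i = idx then y h2.choose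
  else decide (∃ (i : Fin k) (j : Fin 4),
    (σ idx : Sym2 (Fin n × Fin n)) = fEdge n (S.row i) (S.col i) (S.hrow i) (S.hcol i) j)

lemma asg_aE (y : Fin k → Bool) (i : Fin k) : S.asg y (S.aE i) = y i := by
  classical
  have h1 : ∃ i', S.aE i' = S.aE i := ⟨i, rfl⟩
  rw [asg, dif_pos h1]
  congr 1
  exact S.aE_inj h1.choose_spec

lemma asg_bE (y : Fin k → Bool) (i : Fin k) : S.asg y (S.bE i) = y i := by
  classical
  have h1 : ¬ ∃ i', S.aE i' = S.bE i := by
    rintro ⟨i', hi'⟩; exact S.aE_ne_bE i' i hi'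
  have h2 : ∃ i', S.bE i' = S.bE i := ⟨i, rfl⟩
  rw [asg, dif_neg h1, dif_pos h2]
  congr 1
  exact S.bE_inj h2.choose_spec

lemma asg_other (y : Fin k → Bool) (idx : Fin m)
    (ha : ∀ i, S.aE i ≠ idx) (hb : ∀ i, S.bE i ≠ idx) :
    S.asg y idx = decide (∃ (i : Fin k) (j : Fin 4),
      (σ idx : Sym2 (Fin n × Fin n)) = fEdge n (S.row i) (S.col i) (S.hrow i) (S.hcol i) j) := by
  classical
  rw [asg, dif_neg (by rintro ⟨i, hi⟩; exact ha i hi), dif_neg (by rintro ⟨i, hi⟩; exact hb i hi)]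

lemma asg_mem (y : Fin k → Bool) (idx : Fin m) (h : S.asg y idx = true) :
    ∃ (i : Fin k) (j : Fin 4),
      (σ idx : Sym2 (Fin n × Fin n)) = fEdge n (S.row i) (S.col i) (S.hrow i) (S.hcol i) j := by
  classical
  rw [asg] at h
  split at h
  · rename_i h1
    obtain ⟨i, hi⟩ := h1
    exact ⟨i, S.ja i, by rw [← hi, S.haE]⟩
  split at h
  · rename_i h2
    obtain ⟨i, hi⟩ := h2
    exact ⟨i, S.jb i, by rw [← hi, S.hbE]⟩
  · exact of_decide_eq_true h

/-- the combined assignment -/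
noncomputable def cmb (y z : Fin k → Bool) : Fin m → Bool :=
  fun idx => if (idx : ℕ) < hcut then S.asg y idx else S.asg z idx

lemma lab_fEdge (y z : Fin k → Bool) (i : Fin k) (j : Fin 4) :
    edgeLabel σ (S.cmb y z) (fEdge n (S.row i) (S.col i) (S.hrow i) (S.hcol i) j)
      = if j = S.ja i then y i else if j = S.jb i then z i else true := by
  classical
  have hmem := fEdge_mem_edgeSet (n := n) (S.row i) (S.col i) (S.hrow i) (S.hcol i) j
  rw [edgeLabel, dif_pos hmem]
  by_cases hja : j = S.ja i
  · have he : (⟨fEdge n (S.row i) (S.col i) (S.hrow i) (S.hcol i) j, hmem⟩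
        : (mesh n).edgeSet) = σ (S.aE i) := by
      apply Subtype.ext
      show fEdge n (S.row i) (S.col i) (S.hrow i) (S.hcol i) j = _
      rw [S.haE, hja]
    rw [he, Equiv.symm_apply_apply, cmb, if_pos (S.hah i), S.asg_aE, if_pos hja]
  by_cases hjb : j = S.jb i
  · have he : (⟨fEdge n (S.row i) (S.col i) (S.hrow i) (S.hcol i) j, hmem⟩
        : (mesh n).edgeSet) = σ (S.bE i) := by
      apply Subtype.ext
      show fEdge n (S.row i) (S.col i) (S.hrow i) (S.hcol i) j = _
      rw [S.hbE, hjb]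
    rw [he, Equiv.symm_apply_apply, cmb, if_neg (by have := S.hbh i; omega), S.asg_bE,
      if_neg hja, if_pos hjb]
  · set idx := σ.symm ⟨fEdge n (S.row i) (S.col i) (S.hrow i) (S.hcol i) j, hmem⟩ with hidx
    have hσ : (σ idx : Sym2 (Fin n × Fin n))
        = fEdge n (S.row i) (S.col i) (S.hrow i) (S.hcol i) j := by
      rw [hidx, Equiv.apply_symm_apply]
    have ha : ∀ i', S.aE i' ≠ idx := by
      intro i' hi'
      have : (σ (S.aE i') : Sym2 (Fin n × Fin n))
          = fEdge n (S.row i) (S.col i) (S.hrow i) (S.hcol i) j := by rw [hi', hσ]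
      rw [S.haE] at this
      obtain ⟨hii, hjj⟩ := S.face_edge_eq' this
      subst hii; exact hja hjj.symm
    have hb : ∀ i', S.bE i' ≠ idx := by
      intro i' hi'
      have : (σ (S.bE i') : Sym2 (Fin n × Fin n))
          = fEdge n (S.row i) (S.col i) (S.hrow i) (S.hcol i) j := by rw [hi', hσ]
      rw [S.hbE] at this
      obtain ⟨hii, hjj⟩ := S.face_edge_eq' this
      subst hii; exact hjb hjj.symm
    have hval : ∀ w : Fin k → Bool, S.asg w idx = true := by
      intro w
      rw [S.asg_other w idx ha hb, decide_eq_true_eq]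
      exact ⟨i, j, hσ⟩
    rw [if_neg hja, if_neg hjb, cmb]
    split <;> rw [hval]

lemma lab_mem (y z : Fin k → Bool) (e : Sym2 (Fin n × Fin n))
    (h : edgeLabel σ (S.cmb y z) e = true) :
    ∃ (i : Fin k) (j : Fin 4),
      e = fEdge n (S.row i) (S.col i) (S.hrow i) (S.hcol i) j := by
  classical
  rw [edgeLabel] at h
  split at h
  · rename_i hmem
    have he : e = (σ (σ.symm ⟨e, hmem⟩) : Sym2 (Fin n × Fin n)) := by
      rw [Equiv.apply_symm_apply]
    rw [cmb] at h
    split at h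
    · obtain ⟨i, j, hij⟩ := S.asg_mem _ _ h
      exact ⟨i, j, by rw [he, hij]⟩
    · obtain ⟨i, j, hij⟩ := S.asg_mem _ _ h
      exact ⟨i, j, by rw [he, hij]⟩
  · exact absurd h (by simp)


lemma no_walk (y : Fin k → Bool) (u v : Fin n × Fin n)
    (hadj : (mesh n).Adj u v)
    (hlab : edgeLabel σ (S.cmb y y) s(u, v) = false)
    (T : ℕ) (hT : 1 ≤ T) (w : ℕ → Fin n × Fin n)
    (hw0 : w 0 = v) (hwT : w T = u)
    (hstep : ∀ t, t < T → (mesh n).Adj (w t) (w (t+1)) ∧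
      edgeLabel σ (S.cmb y y) s(w t, w (t+1)) = true) :
    False := by
  classical
  obtain ⟨i0, j0, hj0⟩ := S.lab_mem y y _ (hstep 0 hT).2
  -- every vertex of the walk is a corner of face i0
  have Hc : ∀ t, t ≤ T → ∃ p : A2,
      w t = fvtx n (S.row i0) (S.col i0) (S.hrow i0) (S.hcol i0) p := by
    intro t
    induction t with
    | zero =>
      intro _
      have hm : w 0 ∈ fEdge n (S.row i0) (S.col i0) (S.hrow i0) (S.hcol i0) j0 := by
        rw [← hj0]; exact Sym2.mem_mk_left _ _
      exact fEdge_endpoints _ _ _ _ _ _ hm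
    | succ t ih =>
      intro ht
      obtain ⟨p, hp⟩ := ih (by omega)
      obtain ⟨i', j', hj'⟩ := S.lab_mem y y _ (hstep t (by omega)).2
      have h1 : w t ∈ fEdge n (S.row i') (S.col i') (S.hrow i') (S.hcol i') j' := by
        rw [← hj']; exact Sym2.mem_mk_left _ _
      obtain ⟨q, hq⟩ := fEdge_endpoints _ _ _ _ _ _ h1
      have hii : i' = i0 := S.corner_face_eq (hq.symm.trans hp)
      subst hii
      have h2 : w (t+1) ∈ fEdge n (S.row i') (S.col i') (S.hrow i') (S.hcol i') j' := by
        rw [← hj']; exact Sym2.mem_mk_right _ _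
      exact fEdge_endpoints _ _ _ _ _ _ h2
  obtain ⟨pu, hpu⟩ := Hc T le_rfl
  obtain ⟨pv, hpv⟩ := Hc 0 (by omega)
  rw [hwT] at hpu
  rw [hw0] at hpv
  -- the bad edge is an edge of face i0 and both chosen labels are false
  obtain ⟨jc, hjc⟩ : ∃ jc : Fin 4, s(u, v) = fEdge n (S.row i0) (S.col i0)
      (S.hrow i0) (S.hcol i0) jc := by
    rw [hpu, hpv]
    exact adj_corners _ _ _ _ _ _ (by rw [← hpu, ← hpv]; exact hadj)
  rw [hjc, S.lab_fEdge] at hlab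
  have hyi : y i0 = false ∧ (jc = S.ja i0 ∨ jc = S.jb i0) := by
    by_cases h1 : jc = S.ja i0
    · rw [if_pos h1] at hlab; exact ⟨hlab, Or.inl h1⟩
    · rw [if_neg h1] at hlab
      by_cases h2 : jc = S.jb i0
      · rw [if_pos h2] at hlab; exact ⟨hlab, Or.inr h2⟩
      · rw [if_neg h2] at hlab; exact absurd hlab (by simp)
  -- each step is a non-chosen edge of face i0
  have Hs : ∀ t, t < T → ∃ j : Fin 4, j ≠ S.ja i0 ∧ j ≠ S.jb i0 ∧
      s(w t, w (t+1)) = fEdge n (S.row i0) (S.col i0) (S.hrow i0) (S.hcol i0) j := by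
    intro t ht
    obtain ⟨i', j', hj'⟩ := S.lab_mem y y _ (hstep t ht).2
    have h1 : w t ∈ fEdge n (S.row i') (S.col i') (S.hrow i') (S.hcol i') j' := by
      rw [← hj']; exact Sym2.mem_mk_left _ _
    obtain ⟨q, hq⟩ := fEdge_endpoints _ _ _ _ _ _ h1
    obtain ⟨p, hp⟩ := Hc t (by omega)
    have hii : i' = i0 := S.corner_face_eq (hq.symm.trans hp)
    subst hii
    refine ⟨j', ?_, ?_, hj'⟩
    · intro hcon
      have := (hstep t ht).2
      rw [hj', S.lab_fEdge, if_pos hcon, hyi.1] at this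
      exact absurd this (by simp)
    · intro hcon
      have := (hstep t ht).2
      rw [hj', S.lab_fEdge, if_neg (fun hh => S.hjne i' (hh.symm.trans hcon)),
        if_pos hcon, hyi.1] at this
      exact absurd this (by simp)
  -- transfer to the abstract square
  have hinj := fvtx_injective (n := n) (S.row i0) (S.col i0) (S.hrow i0) (S.hcol i0)
  set φ := fvtx n (S.row i0) (S.col i0) (S.hrow i0) (S.hcol i0) with hφ
  have hwc : ∀ t, t ≤ T → ∃ p : A2, w t = φ p := Hc
  have hwc' : ∀ t, ∃ p : A2, (t ≤ T → w t = φ p) := by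
    intro t
    by_cases ht : t ≤ T
    · exact (hwc t ht).imp (fun p hp _ => hp)
    · exact ⟨(false, false), fun h => absurd h ht⟩
  choose wa hwa using hwc'
  apply abstract_no_walk (S.ja i0) (S.jb i0) (S.hjne i0) T wa
  · intro t ht
    obtain ⟨j, hja', hjb', hje⟩ := Hs t ht
    refine ⟨j, hja', hjb', ?_⟩
    apply Sym2.map.injective hinj
    rw [Sym2.map_pair_eq, ← hwa t (by omega), ← hwa (t+1) (by omega), hje, fEdge]
  · have he : s(wa T, wa 0) = E4a jc := by
      apply Sym2.map.injective hinj
      rw [Sym2.map_pair_eq, ← hwa T le_rfl, ← hwa 0 (by omega), hw0, hwT, hjc, fEdge]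
    rcases hyi.2 with h | h
    · left; rw [he, h]
    · right; rw [he, h]


theorem sel_meshTrans (y : Fin k → Bool) : MeshTransHolds n m σ (S.cmb y y) := by
  rintro ⟨l, ⟨hlen, hadjall⟩, hcount⟩
  set lab : Sym2 (Fin n × Fin n) → Bool := edgeLabel σ (S.cmb y y) with hlabdef
  set L := l.length with hL
  have hL3 : 3 ≤ L := hlen
  have hPlen : (l.zip (l.rotate 1)).length = L := by
    rw [List.length_zip, List.length_rotate]; omega
  have hPget : ∀ t (ht : t < L), ((l.zip (l.rotate 1))[t]'(by omega)) =
      (l[t]'(by omega), l[(t+1) % L]'(Nat.mod_lt _ (by omega))) := by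
    intro t ht
    rw [List.getElem_zip, List.getElem_rotate]
  obtain ⟨t0, ht0, hbadt, hgood⟩ := exists_unique_bad (l.zip (l.rotate 1)) _ hcount
  rw [hPlen] at ht0
  have hwd : ∀ t : ℕ, t % L < L := fun t => Nat.mod_lt _ (by omega)
  set w : ℕ → Fin n × Fin n := fun t => l.get ⟨t % L, hwd t⟩ with hwdef
  have hwcongr : ∀ a b : ℕ, a % L = b % L → w a = w b := by
    intro a b hab
    rw [hwdef]
    simp only
    congr 1
    exact Fin.ext hab
  have hwsucc : ∀ t : ℕ, w (t % L + 1) = w (t + 1) := by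
    intro t
    apply hwcongr
    conv_rhs => rw [← Nat.mod_add_mod]
  have hstepgen : ∀ t, t < L → (mesh n).Adj (w t) (w (t+1)) ∧
      ((t ≠ t0 → lab s(w t, w (t+1)) = true) ∧ (t = t0 → lab s(w t, w (t+1)) = false)) := by
    intro t ht
    have hwt : w t = l[t]'(by omega) := by
      rw [hwdef]; simp only [List.get_eq_getElem]; congr 1; exact Nat.mod_eq_of_lt ht
    have hwt1 : w (t+1) = l[(t+1) % L]'(Nat.mod_lt _ (by omega)) := by
      rw [hwdef]; simp only [List.get_eq_getElem]
    have hPt : ((l.zip (l.rotate 1))[t]'(by omega)) = (w t, w (t+1)) := by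
      rw [hPget t ht, hwt, hwt1]
    constructor
    · have := hadjall ((l.zip (l.rotate 1))[t]'(by omega)) (List.getElem_mem _)
      rwa [hPt] at this
    constructor
    · intro hne
      have := hgood t (by omega) hne
      rw [hPt] at this
      simp only [Bool.not_eq_true'] at this
      simpa using this
    · intro heq
      subst heq
      have := hbadt
      rw [hPt] at this
      simpa using this
  -- the walk
  apply S.no_walk y (w t0) (w (t0 + 1)) ((hstepgen t0 ht0).1)
    ((hstepgen t0 ht0).2.2 rfl) (L - 1) (by omega) (fun s => w (t0 + 1 + s))
  · rfl
  · show w (t0 + 1 + (L - 1)) = w t0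
    apply hwcongr
    have h1 : t0 + 1 + (L - 1) = t0 + L := by omega
    rw [h1, Nat.add_mod_right]
  · intro s hs
    have hmodne : (t0 + 1 + s) % L ≠ t0 := by
      have h1 : t0 + 1 + s = t0 + (1 + s) := by omega
      rw [h1]
      exact add_mod_ne L t0 (1+s) ht0 (by omega) (by omega)
    have hmodlt := hwd (t0 + 1 + s)
    have hg := hstepgen ((t0 + 1 + s) % L) hmodlt
    have he1 : w ((t0 + 1 + s) % L) = w (t0 + 1 + s) := hwcongr _ _ (Nat.mod_mod_of_dvd _ dvd_rfl)
    have he2 : w ((t0 + 1 + s) % L + 1) = w (t0 + 1 + s + 1) := hwsucc _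
    rw [he1, he2] at hg
    exact ⟨hg.1, hg.2.1 hmodne⟩


theorem sel_not_meshTrans (y z : Fin k → Bool) (i : Fin k) (hyz : y i ≠ z i) :
    ¬ MeshTransHolds n m σ (S.cmb y z) := by
  classical
  intro hMT
  apply hMT
  set φ := fvtx n (S.row i) (S.col i) (S.hrow i) (S.hcol i) with hφ
  set v1 := φ (false, false)
  set v2 := φ (false, true)
  set v3 := φ (true, true)
  set v4 := φ (true, false)
  set l : List (Fin n × Fin n) := [v1, v2, v3, v4] with hldef
  have hrot : l.rotate 1 = [v2, v3, v4, v1] := by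
    rw [hldef, List.rotate_eq_drop_append_take (by simp)]
    rfl
  have hzip : l.zip (l.rotate 1) = [(v1, v2), (v2, v3), (v3, v4), (v4, v1)] := by
    rw [hrot, hldef]
    rfl
  have hs1 : s(v1, v2) = fEdge n (S.row i) (S.col i) (S.hrow i) (S.hcol i) 0 := rfl
  have hs2 : s(v2, v3) = fEdge n (S.row i) (S.col i) (S.hrow i) (S.hcol i) 3 := rfl
  have hs3 : s(v3, v4) = fEdge n (S.row i) (S.col i) (S.hrow i) (S.hcol i) 1 := by
    rw [Sym2.eq_swap]; rfl
  have hs4 : s(v4, v1) = fEdge n (S.row i) (S.col i) (S.hrow i) (S.hcol i) 2 := by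
    rw [Sym2.eq_swap]; rfl
  refine ⟨l, ⟨by rw [hldef]; simp, ?_⟩, ?_⟩
  · intro p hp
    rw [hzip] at hp
    have hadj : ∀ (a b : A2), adjA a b → (mesh n).Adj (φ a) (φ b) := by
      intro a b hab
      exact (adjA_iff_fvtx _ _ _ _ _ _).2 hab
    simp only [List.mem_cons, List.not_mem_nil, or_false] at hp
    rcases hp with hp | hp | hp | hp <;> subst hp <;> exact hadj _ _ (by decide)
  · rw [hzip, ← List.countP_eq_length_filter]
    simp only [List.countP_cons, List.countP_nil]
    simp only [hs1, hs2, hs3, hs4, S.lab_fEdge y z i]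
    have hab := S.hjne i
    set a := S.ja i with ha
    set b := S.jb i with hb
    clear_value a b
    rcases Bool.eq_false_or_eq_true (y i) with hy | hy <;>
      rcases Bool.eq_false_or_eq_true (z i) with hz | hz <;>
      rw [hy, hz] at hyz ⊢ <;>
      first
      | (exact absurd rfl hyz)
      | (fin_cases a <;> fin_cases b <;> first | exact absurd rfl hab | decide)

end Sel

section Ladder

variable {n : ℕ}

lemma fEdge_right_left (r c : ℕ) (hr : r + 1 < n) (hc : c + 1 < n) (hc' : (c+1) + 1 < n) :
    fEdge n r c hr hc 3 = fEdge n r (c+1) hr hc' 2 := rfl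

lemma fEdge_bot_top (r c : ℕ) (hr : r + 1 < n) (hr' : (r+1) + 1 < n) (hc : c + 1 < n) :
    fEdge n r c hr hc 1 = fEdge n (r+1) c hr' hc 0 := rfl

lemma vtx_eq (x : Fin n × Fin n) (r c : ℕ) (hr : r + 1 < n) (hc : c + 1 < n) (p : A2)
    (h1 : (x.1 : ℕ) = r + cond p.1 1 0) (h2 : (x.2 : ℕ) = c + cond p.2 1 0) :
    x = fvtx n r c hr hc p := by
  have e1 : x.1 = (fvtx n r c hr hc p).1 := Fin.ext (by rw [fvtx_row]; exact h1)
  have e2 : x.2 = (fvtx n r c hr hc p).2 := Fin.ext (by rw [fvtx_col]; exact h2)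
  exact Prod.ext e1 e2

/-- rows of corners of face (r,c) lie in [r, r+1] -/
lemma fEdge_rows (r c : ℕ) (hr : r + 1 < n) (hc : c + 1 < n) (j : Fin 4)
    (v : Fin n × Fin n) (hv : v ∈ fEdge n r c hr hc j) :
    (r ≤ (v.1 : ℕ) ∧ (v.1 : ℕ) ≤ r + 1) ∧ (c ≤ (v.2 : ℕ) ∧ (v.2 : ℕ) ≤ c + 1) := by
  obtain ⟨p, hp⟩ := fEdge_endpoints r c hr hc j v hv
  subst hp
  rw [fvtx_row, fvtx_col]
  have := Sel.cond_le_one p.1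
  have := Sel.cond_le_one p.2
  omega

/-- if all faces of a horizontal ladder are monochromatic, the whole ladder is -/
lemma ladder_mono_h (g : Sym2 (Fin n × Fin n) → Bool) (r : ℕ) (hr : r + 1 < n)
    (hn : 2 ≤ n)
    (hmono : ∀ c (hc : c + 1 < n) (j j' : Fin 4),
      g (fEdge n r c hr hc j) = g (fEdge n r c hr hc j')) :
    ∀ c (hc : c + 1 < n) (j : Fin 4),
      g (fEdge n r c hr hc j) = g (fEdge n r 0 hr (by omega) 0) := by
  intro c
  induction c with
  | zero => intro hc j; exact hmono 0 hc j 0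
  | succ c ih =>
    intro hc j
    have h1 : g (fEdge n r (c+1) hr hc j) = g (fEdge n r (c+1) hr hc 2) := hmono _ hc j 2
    rw [h1, ← fEdge_right_left r c hr (by omega) hc]
    exact ih (by omega) 3

lemma ladder_mono_v (g : Sym2 (Fin n × Fin n) → Bool) (c : ℕ) (hc : c + 1 < n)
    (hn : 2 ≤ n)
    (hmono : ∀ r (hr : r + 1 < n) (j j' : Fin 4),
      g (fEdge n r c hr hc j) = g (fEdge n r c hr hc j')) :
    ∀ r (hr : r + 1 < n) (j : Fin 4),
      g (fEdge n r c hr hc j) = g (fEdge n 0 c (by omega) hc 0) := by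
  intro r
  induction r with
  | zero => intro hr j; exact hmono 0 hr j 0
  | succ r ih =>
    intro hr j
    have h1 : g (fEdge n (r+1) c hr hc j) = g (fEdge n (r+1) c hr hc 0) := hmono _ hr j 0
    rw [h1, ← fEdge_bot_top r c (by omega) hr hc]
    exact ih (by omega) 1

/-- classification of the edges of a horizontal band (rows r, r+1) -/
lemma band_edge_h (r : ℕ) (hr : r + 1 < n) (e : Sym2 (Fin n × Fin n))
    (he : e ∈ (mesh n).edgeSet)
    (hband : ∀ v ∈ e, r ≤ (v.1 : ℕ) ∧ (v.1 : ℕ) ≤ r + 1) :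
    ∃ (c : ℕ) (hc : c + 1 < n) (j : Fin 4), e = fEdge n r c hr hc j := by
  revert he hband
  induction e using Sym2.ind with
  | _ a b =>
    intro he hband
    rw [SimpleGraph.mem_edgeSet, mesh_adj] at he
    have hba := hband a (Sym2.mem_mk_left a b)
    have hbb := hband b (Sym2.mem_mk_right a b)
    have hbn : (b.2 : ℕ) < n := b.2.isLt
    have han : (a.2 : ℕ) < n := a.2.isLt
    rcases he with ⟨hrow, hcol⟩ | ⟨hrow, hcol⟩
    · rcases hrow with h1 | h1
      · by_cases hc0 : (a.2 : ℕ) + 1 < n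
        · obtain ⟨c0, hc0eq⟩ : ∃ c0:ℕ, c0 = (a.2 : ℕ) := ⟨_, rfl⟩
          have hb1 : c0 + 1 < n := by omega
          refine ⟨c0, hb1, 2, ?_⟩
          have hA := vtx_eq a r c0 hr hb1 (true, false) (by simp; omega) (by simp; omega)
          have hB := vtx_eq b r c0 hr hb1 (false, false) (by simp; omega) (by simp; omega)
          rw [hA, hB]
          exact Sym2.eq_swap
        · obtain ⟨c0, hc0eq⟩ : ∃ c0:ℕ, c0 = (a.2 : ℕ) - 1 := ⟨_, rfl⟩
          have hb1 : c0 + 1 < n := by omega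
          refine ⟨c0, hb1, 3, ?_⟩
          have hA := vtx_eq a r c0 hr hb1 (true, true) (by simp; omega) (by simp; omega)
          have hB := vtx_eq b r c0 hr hb1 (false, true) (by simp; omega) (by simp; omega)
          rw [hA, hB]
          exact Sym2.eq_swap
      · by_cases hc0 : (a.2 : ℕ) + 1 < n
        · obtain ⟨c0, hc0eq⟩ : ∃ c0:ℕ, c0 = (a.2 : ℕ) := ⟨_, rfl⟩
          have hb1 : c0 + 1 < n := by omega
          refine ⟨c0, hb1, 2, ?_⟩
          have hA := vtx_eq a r c0 hr hb1 (false, false) (by simp; omega) (by simp; omega)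
          have hB := vtx_eq b r c0 hr hb1 (true, false) (by simp; omega) (by simp; omega)
          rw [hA, hB]
          rfl
        · obtain ⟨c0, hc0eq⟩ : ∃ c0:ℕ, c0 = (a.2 : ℕ) - 1 := ⟨_, rfl⟩
          have hb1 : c0 + 1 < n := by omega
          refine ⟨c0, hb1, 3, ?_⟩
          have hA := vtx_eq a r c0 hr hb1 (false, true) (by simp; omega) (by simp; omega)
          have hB := vtx_eq b r c0 hr hb1 (true, true) (by simp; omega) (by simp; omega)
          rw [hA, hB]
          rfl
    · have hrval : (a.1 : ℕ) = r ∨ (a.1 : ℕ) = r + 1 := by omega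
      rcases hcol with h1 | h1
      · rcases hrval with h2 | h2
        · obtain ⟨c0, hc0eq⟩ : ∃ c0:ℕ, c0 = (b.2 : ℕ) := ⟨_, rfl⟩
          have hb1 : c0 + 1 < n := by omega
          refine ⟨c0, hb1, 0, ?_⟩
          have hA := vtx_eq a r c0 hr hb1 (false, true) (by simp; omega) (by simp; omega)
          have hB := vtx_eq b r c0 hr hb1 (false, false) (by simp; omega) (by simp; omega)
          rw [hA, hB]
          exact Sym2.eq_swap
        · obtain ⟨c0, hc0eq⟩ : ∃ c0:ℕ, c0 = (b.2 : ℕ) := ⟨_, rfl⟩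
          have hb1 : c0 + 1 < n := by omega
          refine ⟨c0, hb1, 1, ?_⟩
          have hA := vtx_eq a r c0 hr hb1 (true, true) (by simp; omega) (by simp; omega)
          have hB := vtx_eq b r c0 hr hb1 (true, false) (by simp; omega) (by simp; omega)
          rw [hA, hB]
          exact Sym2.eq_swap
      · rcases hrval with h2 | h2
        · obtain ⟨c0, hc0eq⟩ : ∃ c0:ℕ, c0 = (a.2 : ℕ) := ⟨_, rfl⟩
          have hb1 : c0 + 1 < n := by omega
          refine ⟨c0, hb1, 0, ?_⟩
          have hA := vtx_eq a r c0 hr hb1 (false, false) (by simp; omega) (by simp; omega)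
          have hB := vtx_eq b r c0 hr hb1 (false, true) (by simp; omega) (by simp; omega)
          rw [hA, hB]
          rfl
        · obtain ⟨c0, hc0eq⟩ : ∃ c0:ℕ, c0 = (a.2 : ℕ) := ⟨_, rfl⟩
          have hb1 : c0 + 1 < n := by omega
          refine ⟨c0, hb1, 1, ?_⟩
          have hA := vtx_eq a r c0 hr hb1 (true, false) (by simp; omega) (by simp; omega)
          have hB := vtx_eq b r c0 hr hb1 (true, true) (by simp; omega) (by simp; omega)
          rw [hA, hB]
          rfl

/-- classification of the edges of a vertical band (columns c, c+1) -/
lemma band_edge_v (c : ℕ) (hc : c + 1 < n) (e : Sym2 (Fin n × Fin n))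
    (he : e ∈ (mesh n).edgeSet)
    (hband : ∀ v ∈ e, c ≤ (v.2 : ℕ) ∧ (v.2 : ℕ) ≤ c + 1) :
    ∃ (r : ℕ) (hr : r + 1 < n) (j : Fin 4), e = fEdge n r c hr hc j := by
  revert he hband
  induction e using Sym2.ind with
  | _ a b =>
    intro he hband
    rw [SimpleGraph.mem_edgeSet, mesh_adj] at he
    have hba := hband a (Sym2.mem_mk_left a b)
    have hbb := hband b (Sym2.mem_mk_right a b)
    have hbn : (b.1 : ℕ) < n := b.1.isLt
    have han : (a.1 : ℕ) < n := a.1.isLt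
    rcases he with ⟨hrow, hcol⟩ | ⟨hrow, hcol⟩
    · have hcval : (a.2 : ℕ) = c ∨ (a.2 : ℕ) = c + 1 := by omega
      rcases hrow with h1 | h1
      · rcases hcval with h2 | h2
        · obtain ⟨c0, hc0eq⟩ : ∃ c0:ℕ, c0 = (b.1 : ℕ) := ⟨_, rfl⟩
          have hb1 : c0 + 1 < n := by omega
          refine ⟨c0, hb1, 2, ?_⟩
          have hA := vtx_eq a c0 c hb1 hc (true, false) (by simp; omega) (by simp; omega)
          have hB := vtx_eq b c0 c hb1 hc (false, false) (by simp; omega) (by simp; omega)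
          rw [hA, hB]
          exact Sym2.eq_swap
        · obtain ⟨c0, hc0eq⟩ : ∃ c0:ℕ, c0 = (b.1 : ℕ) := ⟨_, rfl⟩
          have hb1 : c0 + 1 < n := by omega
          refine ⟨c0, hb1, 3, ?_⟩
          have hA := vtx_eq a c0 c hb1 hc (true, true) (by simp; omega) (by simp; omega)
          have hB := vtx_eq b c0 c hb1 hc (false, true) (by simp; omega) (by simp; omega)
          rw [hA, hB]
          exact Sym2.eq_swap
      · rcases hcval with h2 | h2
        · obtain ⟨c0, hc0eq⟩ : ∃ c0:ℕ, c0 = (a.1 : ℕ) := ⟨_, rfl⟩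
          have hb1 : c0 + 1 < n := by omega
          refine ⟨c0, hb1, 2, ?_⟩
          have hA := vtx_eq a c0 c hb1 hc (false, false) (by simp; omega) (by simp; omega)
          have hB := vtx_eq b c0 c hb1 hc (true, false) (by simp; omega) (by simp; omega)
          rw [hA, hB]
          rfl
        · obtain ⟨c0, hc0eq⟩ : ∃ c0:ℕ, c0 = (a.1 : ℕ) := ⟨_, rfl⟩
          have hb1 : c0 + 1 < n := by omega
          refine ⟨c0, hb1, 3, ?_⟩
          have hA := vtx_eq a c0 c hb1 hc (false, true) (by simp; omega) (by simp; omega)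
          have hB := vtx_eq b c0 c hb1 hc (true, true) (by simp; omega) (by simp; omega)
          rw [hA, hB]
          rfl
    · rcases hcol with h1 | h1
      · by_cases hr0 : (a.1 : ℕ) + 1 < n
        · obtain ⟨c0, hc0eq⟩ : ∃ c0:ℕ, c0 = (a.1 : ℕ) := ⟨_, rfl⟩
          have hb1 : c0 + 1 < n := by omega
          refine ⟨c0, hb1, 0, ?_⟩
          have hA := vtx_eq a c0 c hb1 hc (false, true) (by simp; omega) (by simp; omega)
          have hB := vtx_eq b c0 c hb1 hc (false, false) (by simp; omega) (by simp; omega)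
          rw [hA, hB]
          exact Sym2.eq_swap
        · obtain ⟨c0, hc0eq⟩ : ∃ c0:ℕ, c0 = (a.1 : ℕ) - 1 := ⟨_, rfl⟩
          have hb1 : c0 + 1 < n := by omega
          refine ⟨c0, hb1, 1, ?_⟩
          have hA := vtx_eq a c0 c hb1 hc (true, true) (by simp; omega) (by simp; omega)
          have hB := vtx_eq b c0 c hb1 hc (true, false) (by simp; omega) (by simp; omega)
          rw [hA, hB]
          exact Sym2.eq_swap
      · by_cases hr0 : (a.1 : ℕ) + 1 < n
        · obtain ⟨c0, hc0eq⟩ : ∃ c0:ℕ, c0 = (a.1 : ℕ) := ⟨_, rfl⟩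
          have hb1 : c0 + 1 < n := by omega
          refine ⟨c0, hb1, 0, ?_⟩
          have hA := vtx_eq a c0 c hb1 hc (false, false) (by simp; omega) (by simp; omega)
          have hB := vtx_eq b c0 c hb1 hc (false, true) (by simp; omega) (by simp; omega)
          rw [hA, hB]
          rfl
        · obtain ⟨c0, hc0eq⟩ : ∃ c0:ℕ, c0 = (a.1 : ℕ) - 1 := ⟨_, rfl⟩
          have hb1 : c0 + 1 < n := by omega
          refine ⟨c0, hb1, 1, ?_⟩
          have hA := vtx_eq a c0 c hb1 hc (true, false) (by simp; omega) (by simp; omega)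
          have hB := vtx_eq b c0 c hb1 hc (true, true) (by simp; omega) (by simp; omega)
          rw [hA, hB]
          rfl

end Ladder

section Dichotomy

variable {n m : ℕ}

theorem exists_sel (hn : 2 ≤ n) (σ : Fin m ≃ (mesh n).edgeSet) :
    ∃ hcut : ℕ, Nonempty (Sel n m hcut (n/2) σ) := by
  classical
  set k := n / 2 with hkdef
  have hk1 : 1 ≤ k := by omega
  have hnk : Nonempty (Fin k) := ⟨⟨0, by omega⟩⟩
  have hr2 : ∀ i : Fin k, 2 * (i : ℕ) + 1 < n := by
    intro i; have := i.isLt; omega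
  set Bset : Fin k → Finset (Fin m) := fun i =>
    Finset.univ.filter (fun idx => ∀ v ∈ (σ idx : Sym2 (Fin n × Fin n)),
      2*(i:ℕ) ≤ (v.1:ℕ) ∧ (v.1:ℕ) ≤ 2*(i:ℕ)+1) with hBdef
  have mem_Bset_of : ∀ (i : Fin k) (c : ℕ) (hc : c + 1 < n) (j : Fin 4),
      σ.symm ⟨fEdge n (2*(i:ℕ)) c (hr2 i) hc j, fEdge_mem_edgeSet _ _ _ _ _⟩ ∈ Bset i := by
    intro i c hc j
    rw [hBdef]
    simp only [Finset.mem_filter, Finset.mem_univ, true_and]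
    intro v hv
    rw [Equiv.apply_symm_apply] at hv
    exact (fEdge_rows _ _ _ _ _ _ hv).1
  have Bset_edge : ∀ (i : Fin k) (idx : Fin m), idx ∈ Bset i →
      ∃ (c : ℕ) (hc : c + 1 < n) (j : Fin 4),
        (σ idx : Sym2 (Fin n × Fin n)) = fEdge n (2*(i:ℕ)) c (hr2 i) hc j := by
    intro i idx hidx
    rw [hBdef] at hidx
    simp only [Finset.mem_filter, Finset.mem_univ, true_and] at hidx
    exact band_edge_h _ (hr2 i) _ (σ idx).2 hidx
  have hBne : ∀ i : Fin k, (Bset i).Nonempty := by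
    intro i
    exact ⟨_, mem_Bset_of i 0 (by omega) 2⟩
  set f : Fin k → Fin m := fun i => (Bset i).min' (hBne i) with hfdef
  set l : Fin k → Fin m := fun i => (Bset i).max' (hBne i) with hldef
  have hfl : ∀ i, (f i : ℕ) < (l i : ℕ) := by
    intro i
    have h1 := mem_Bset_of i 0 (by omega) 2
    have h2 := mem_Bset_of i 0 (by omega) 3
    have hne : σ.symm ⟨fEdge n (2*(i:ℕ)) 0 (hr2 i) (by omega) 2, fEdge_mem_edgeSet _ _ _ _ _⟩
        ≠ σ.symm ⟨fEdge n (2*(i:ℕ)) 0 (hr2 i) (by omega) 3, fEdge_mem_edgeSet _ _ _ _ _⟩ := by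
      intro h
      have := σ.symm.injective h
      have h23 := fEdge_inj (n := n) (2*(i:ℕ)) 0 (hr2 i) (by omega) 2 3
        (congrArg Subtype.val this)
      exact absurd h23 (by decide)
    have h := Finset.min'_lt_max' (s := Bset i) h1 h2 hne
    exact h
  have hdisj : ∀ (i i' : Fin k), i ≠ i' → ∀ idx, idx ∈ Bset i → idx ∉ Bset i' := by
    intro i i' hne idx h1 h2
    rw [hBdef] at h1 h2
    simp only [Finset.mem_filter, Finset.mem_univ, true_and] at h1 h2
    have hv := Sym2.out_fst_mem (σ idx : Sym2 (Fin n × Fin n))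
    have r1 := h1 _ hv
    have r2 := h2 _ hv
    have : (i : ℕ) ≠ (i' : ℕ) := fun h => hne (Fin.ext h)
    omega
  by_cases hcase : ∀ i j : Fin k, (f i : ℕ) < (l j : ℕ)
  · -- Case A : a common cut makes every horizontal band bicolored
    set hcut := (Finset.univ.sup fun i : Fin k => (f i : ℕ)) + 1 with hcutdef
    set g : Sym2 (Fin n × Fin n) → Bool := fun e =>
      if he : e ∈ (mesh n).edgeSet then decide ((σ.symm ⟨e, he⟩ : ℕ) < hcut) else false
      with hgdef
    have gval : ∀ (e : Sym2 (Fin n × Fin n)) (he : e ∈ (mesh n).edgeSet),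
        g e = decide ((σ.symm ⟨e, he⟩ : ℕ) < hcut) := by
      intro e he
      rw [hgdef]
      exact dif_pos he
    have hA : ∀ i, (f i : ℕ) < hcut := by
      intro i
      have h : (f i : ℕ) ≤ Finset.univ.sup (fun i : Fin k => (f i : ℕ)) :=
        Finset.le_sup (f := fun i : Fin k => (f i : ℕ)) (Finset.mem_univ i)
      omega
    have hB : ∀ i, hcut ≤ (l i : ℕ) := by
      intro i
      obtain ⟨i', -, hieq⟩ := Finset.exists_mem_eq_sup Finset.univ Finset.univ_nonempty
        (fun i : Fin k => (f i : ℕ))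
      have := hcase i' i
      omega
    have key : ∀ i : Fin k, ∃ (c : ℕ) (hc : c + 1 < n) (j1 j2 : Fin 4),
        g (fEdge n (2*(i:ℕ)) c (hr2 i) hc j1) = true ∧
        g (fEdge n (2*(i:ℕ)) c (hr2 i) hc j2) = false := by
      intro i
      by_contra hcon
      push_neg at hcon
      have hmono : ∀ c (hc : c + 1 < n) (j j' : Fin 4),
          g (fEdge n (2*(i:ℕ)) c (hr2 i) hc j) = g (fEdge n (2*(i:ℕ)) c (hr2 i) hc j') := by
        intro c hc j j'
        by_contra hne
        rcases Bool.eq_false_or_eq_true (g (fEdge n (2*(i:ℕ)) c (hr2 i) hc j)) with h1 | h1 <;>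
          rcases Bool.eq_false_or_eq_true (g (fEdge n (2*(i:ℕ)) c (hr2 i) hc j')) with h2 | h2
        · exact hne (h1.trans h2.symm)
        · exact hcon c hc j j' h1 h2
        · exact hcon c hc j' j h2 h1
        · exact hne (h1.trans h2.symm)
      obtain ⟨cf, hcf, jf, hf⟩ := Bset_edge i (f i) (Finset.min'_mem _ _)
      obtain ⟨cl, hcl, jl, hl⟩ := Bset_edge i (l i) (Finset.max'_mem _ _)
      have e1 : g ((σ (f i) : Sym2 (Fin n × Fin n))) = true := by
        rw [gval _ (σ (f i)).2]
        simp only [Subtype.coe_eta, Equiv.symm_apply_apply]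
        exact decide_eq_true (hA i)
      have e2 : g ((σ (l i) : Sym2 (Fin n × Fin n))) = false := by
        rw [gval _ (σ (l i)).2]
        simp only [Subtype.coe_eta, Equiv.symm_apply_apply]
        exact decide_eq_false (by have := hB i; omega)
      rw [hf] at e1
      rw [hl] at e2
      rw [ladder_mono_h g (2*(i:ℕ)) (hr2 i) hn hmono cf hcf jf] at e1
      rw [ladder_mono_h g (2*(i:ℕ)) (hr2 i) hn hmono cl hcl jl] at e2
      rw [e1] at e2
      simp at e2
    choose cc hcc j1c j2c hkey1 hkey2 using key
    refine ⟨hcut, ⟨{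
      row := fun i => 2*(i:ℕ)
      col := cc
      hrow := fun i => hr2 i
      hcol := hcc
      far := ?_
      aE := fun i => σ.symm ⟨fEdge n (2*(i:ℕ)) (cc i) (hr2 i) (hcc i) (j1c i),
        fEdge_mem_edgeSet _ _ _ _ _⟩
      bE := fun i => σ.symm ⟨fEdge n (2*(i:ℕ)) (cc i) (hr2 i) (hcc i) (j2c i),
        fEdge_mem_edgeSet _ _ _ _ _⟩
      ja := j1c
      jb := j2c
      haE := ?_
      hbE := ?_
      hjne := ?_
      hah := ?_
      hbh := ?_ }⟩⟩
    · intro i j hne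
      have hvne : (i : ℕ) ≠ (j : ℕ) := fun h => hne (Fin.ext h)
      show 2*(i:ℕ) + 2 ≤ 2*(j:ℕ) ∨ 2*(j:ℕ) + 2 ≤ 2*(i:ℕ) ∨ cc i + 2 ≤ cc j ∨ cc j + 2 ≤ cc i
      omega
    · intro i
      rw [Equiv.apply_symm_apply]
    · intro i
      rw [Equiv.apply_symm_apply]
    · intro i h
      have := hkey1 i
      rw [h, hkey2 i] at this
      exact Bool.false_ne_true this
    · intro i
      have := hkey1 i
      rw [gval _ (fEdge_mem_edgeSet _ _ _ _ _)] at this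
      exact of_decide_eq_true this
    · intro i
      have := hkey2 i
      rw [gval _ (fEdge_mem_edgeSet _ _ _ _ _)] at this
      exact Nat.le_of_not_lt (of_decide_eq_false this)
  · -- Case B : one band is entirely revealed before another is touched
    push_neg at hcase
    obtain ⟨i0, j0, hle⟩ := hcase
    have hne0 : j0 ≠ i0 := by
      intro h
      subst h
      exact absurd (hfl j0) (by omega)
    set hcut := (f i0 : ℕ) with hcutdef
    set g : Sym2 (Fin n × Fin n) → Bool := fun e =>
      if he : e ∈ (mesh n).edgeSet then decide ((σ.symm ⟨e, he⟩ : ℕ) < hcut) else false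
      with hgdef
    have gval : ∀ (e : Sym2 (Fin n × Fin n)) (he : e ∈ (mesh n).edgeSet),
        g e = decide ((σ.symm ⟨e, he⟩ : ℕ) < hcut) := by
      intro e he
      rw [hgdef]
      exact dif_pos he
    have hAband : ∀ idx ∈ Bset j0, (idx : ℕ) < hcut := by
      intro idx hidx
      have h1 : idx ≤ l j0 := Finset.le_max' _ _ hidx
      have h2 : idx ≠ f i0 := by
        intro h
        exact hdisj j0 i0 hne0 idx hidx (h ▸ Finset.min'_mem _ _)
      have h3 : (idx : ℕ) ≠ (f i0 : ℕ) := fun h => h2 (Fin.ext h)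
      have h4 : (idx : ℕ) ≤ (l j0 : ℕ) := h1
      omega
    have hBband : ∀ idx ∈ Bset i0, hcut ≤ (idx : ℕ) := by
      intro idx hidx
      exact Finset.min'_le _ _ hidx
    have key : ∀ t : Fin k, ∃ (r : ℕ) (hrp : r + 1 < n) (j1 j2 : Fin 4),
        g (fEdge n r (2*(t:ℕ)) hrp (hr2 t) j1) = true ∧
        g (fEdge n r (2*(t:ℕ)) hrp (hr2 t) j2) = false := by
      intro t
      by_contra hcon
      push_neg at hcon
      have hmono : ∀ r (hrp : r + 1 < n) (j j' : Fin 4),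
          g (fEdge n r (2*(t:ℕ)) hrp (hr2 t) j) = g (fEdge n r (2*(t:ℕ)) hrp (hr2 t) j') := by
        intro r hrp j j'
        by_contra hne
        rcases Bool.eq_false_or_eq_true (g (fEdge n r (2*(t:ℕ)) hrp (hr2 t) j)) with h1 | h1 <;>
          rcases Bool.eq_false_or_eq_true (g (fEdge n r (2*(t:ℕ)) hrp (hr2 t) j')) with h2 | h2
        · exact hne (h1.trans h2.symm)
        · exact hcon r hrp j j' h1 h2
        · exact hcon r hrp j' j h2 h1
        · exact hne (h1.trans h2.symm)
      have e1 : g (fEdge n (2*(j0:ℕ)) (2*(t:ℕ)) (hr2 j0) (hr2 t) 2) = true := by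
        rw [gval _ (fEdge_mem_edgeSet _ _ _ _ _)]
        exact decide_eq_true (hAband _ (mem_Bset_of j0 (2*(t:ℕ)) (hr2 t) 2))
      have e2 : g (fEdge n (2*(i0:ℕ)) (2*(t:ℕ)) (hr2 i0) (hr2 t) 2) = false := by
        rw [gval _ (fEdge_mem_edgeSet _ _ _ _ _)]
        exact decide_eq_false (by have := hBband _ (mem_Bset_of i0 (2*(t:ℕ)) (hr2 t) 2); omega)
      rw [ladder_mono_v g (2*(t:ℕ)) (hr2 t) hn hmono (2*(j0:ℕ)) (hr2 j0) 2] at e1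
      rw [ladder_mono_v g (2*(t:ℕ)) (hr2 t) hn hmono (2*(i0:ℕ)) (hr2 i0) 2] at e2
      rw [e1] at e2
      simp at e2
    choose rr hrr j1c j2c hkey1 hkey2 using key
    refine ⟨hcut, ⟨{
      row := rr
      col := fun t => 2*(t:ℕ)
      hrow := hrr
      hcol := fun t => hr2 t
      far := ?_
      aE := fun t => σ.symm ⟨fEdge n (rr t) (2*(t:ℕ)) (hrr t) (hr2 t) (j1c t),
        fEdge_mem_edgeSet _ _ _ _ _⟩
      bE := fun t => σ.symm ⟨fEdge n (rr t) (2*(t:ℕ)) (hrr t) (hr2 t) (j2c t),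
        fEdge_mem_edgeSet _ _ _ _ _⟩
      ja := j1c
      jb := j2c
      haE := ?_
      hbE := ?_
      hjne := ?_
      hah := ?_
      hbh := ?_ }⟩⟩
    · intro i j hne
      have hvne : (i : ℕ) ≠ (j : ℕ) := fun h => hne (Fin.ext h)
      show rr i + 2 ≤ rr j ∨ rr j + 2 ≤ rr i ∨ 2*(i:ℕ) + 2 ≤ 2*(j:ℕ) ∨ 2*(j:ℕ) + 2 ≤ 2*(i:ℕ)
      omega
    · intro i
      rw [Equiv.apply_symm_apply]
    · intro i
      rw [Equiv.apply_symm_apply]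
    · intro i h
      have := hkey1 i
      rw [h, hkey2 i] at this
      exact Bool.false_ne_true this
    · intro i
      have := hkey1 i
      rw [gval _ (fEdge_mem_edgeSet _ _ _ _ _)] at this
      exact of_decide_eq_true this
    · intro i
      have := hkey2 i
      rw [gval _ (fEdge_mem_edgeSet _ _ _ _ _)] at this
      exact Nat.le_of_not_lt (of_decide_eq_false this)

end Dichotomy

end MeshFool


namespace MeshFool

theorem sel_bound {n m hcut k : ℕ} {σ : Fin m ≃ (mesh n).edgeSet}
    (S : Sel n m hcut k σ) (D : OBDD m)
    (hD : ∀ χ, D.eval χ = true ↔ MeshTransHolds n m σ χ) : 2 ^ k ≤ D.numNodes := by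
  classical
  have β1 : Fin (2 ^ k) ≃ (Fin k → Fin 2) :=
    (finFunctionFinEquiv : (Fin k → Fin 2) ≃ Fin (2 ^ k)).symm
  have β2 : (Fin k → Fin 2) ≃ (Fin k → Bool) :=
    Equiv.piCongrRight (fun _ => finTwoEquiv)
  set β : Fin (2 ^ k) ≃ (Fin k → Bool) := β1.trans β2 with hβ
  apply OBDDFool.fooling hcut k D.eval (fun y => S.asg (β y)) (fun y => S.asg (β y))
    ?_ ?_ D (fun _ => rfl)
  · intro y
    exact (hD _).2 (S.sel_meshTrans (β y))
  · intro y z hyz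
    have hne : β y ≠ β z := fun h => hyz (β.injective h)
    obtain ⟨i, hi⟩ := Function.ne_iff.1 hne
    have hnot := S.sel_not_meshTrans (β y) (β z) i hi
    rcases Bool.eq_false_or_eq_true
      (D.eval (fun i => if (i : ℕ) < hcut then S.asg (β y) i else S.asg (β z) i)) with h | h
    · exact absurd ((hD _).1 h) hnot
    · exact h

theorem mesh_lower_bound (n m : ℕ) (σ : Fin m ≃ (mesh n).edgeSet) (D : OBDD m)
    (hD : ∀ χ, D.eval χ = true ↔ MeshTransHolds n m σ χ) :
    (2 : ℝ) ^ (((n : ℝ) - 3) / 4) ≤ (D.numNodes : ℝ) := by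
  have hnodes : (2 : ℕ) ≤ D.numNodes := by
    rw [OBDD.numNodes]; omega
  have hnodes' : (2 : ℝ) ≤ (D.numNodes : ℝ) := by exact_mod_cast hnodes
  by_cases hn : 2 ≤ n
  · obtain ⟨hcut, ⟨S⟩⟩ := exists_sel hn σ
    have hb := sel_bound S D hD
    have h1 : (2 : ℝ) ^ (((n : ℝ) - 3) / 4) ≤ (2 : ℝ) ^ ((n / 2 : ℕ) : ℝ) := by
      apply Real.rpow_le_rpow_of_exponent_le one_le_two
      have h2 : (n : ℕ) ≤ 2 * (n / 2) + 1 := by omega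
      have h3 : (n : ℝ) ≤ 2 * ((n / 2 : ℕ) : ℝ) + 1 := by exact_mod_cast h2
      linarith
    have h4 : (2 : ℝ) ^ ((n / 2 : ℕ) : ℝ) = ((2 ^ (n / 2) : ℕ) : ℝ) := by
      rw [Real.rpow_natCast]
      push_cast
      ring
    rw [h4] at h1
    refine h1.trans ?_
    exact_mod_cast hb
  · have h1 : (2 : ℝ) ^ (((n : ℝ) - 3) / 4) ≤ 1 := by
      apply Real.rpow_le_one_of_one_le_of_nonpos one_le_two
      have h5 : (n : ℝ) ≤ 1 := by
        have : n ≤ 1 := by omega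
        exact_mod_cast this
      linarith
    refine h1.trans ?_
    linarith

end MeshFool

theorem stmt19 :
    (∀ (m h k : ℕ) (F : (Fin m → Bool) → Bool)
        (a b : Fin (2 ^ k) → (Fin m → Bool)),
        (∀ y, F (fun i => if (i : ℕ) < h then a y i else b y i) = true) →
        (∀ y z, y ≠ z →
          F (fun i => if (i : ℕ) < h then a y i else b z i) = false) →
        ∀ D : OBDD m, (∀ χ, D.eval χ = F χ) → 2 ^ k ≤ D.numNodes) ∧
    (∀ (n m : ℕ) (σ : Fin m ≃ (mesh n).edgeSet) (D : OBDD m),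
        (∀ χ, D.eval χ = true ↔ MeshTransHolds n m σ χ) →
        (2 : ℝ) ^ (((n : ℝ) - 3) / 4) ≤ (D.numNodes : ℝ)) := by
  constructor
  · intro m h k F a b h1 h2 D hD
    exact OBDDFool.fooling h k F a b h1 h2 D hD
  · intro n m σ D hD
    exact MeshFool.mesh_lower_bound n m σ D hD
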